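/- Let $\psi : \mathbb{N} \to (0,\infty)$ and let $T_n(x) = \frac{a_0}{2} + \sum_{k=1}^n (a_k\cos kx + b_k \sin kx)$ be a trigonometric polynomial satisfying $\max_t |T_n(t)| \le \frac{1}{\sqrt{\pi}}\left(\frac{1}{\psi^2(n)} + 2\sum_{k=1}^{n-1}\frac{1}{\psi^2(k)}\right)^{-1/2}$. Then $\sqrt{\pi}\left(\sum_{k=1}^{n-1}\frac{a_k^2+b_k^2}{\psi^2(k)} + \frac{a_n^2+b_n^2}{\psi^2(n)}\right)^{1/2} \le 1$. -/

import Mathlib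

open Real Finset intervalIntegral

lemma int_cos_int (j : ℤ) :
    ∫ x in (0:ℝ)..(2*π), Real.cos (j*x) = if j = 0 then 2*π else 0 := by
  split_ifs with h
  · simp [h]
  · have hj : (j:ℝ) ≠ 0 := by exact_mod_cast h
    rw [intervalIntegral.integral_comp_mul_left (fun x => Real.cos x) hj]
    have h2 : Real.sin ((j:ℝ)*(2*π)) = 0 := by
      have : (j:ℝ)*(2*π) = ((2*j : ℤ):ℝ) * π := by push_cast; ring
      rw [this]; exact Real.sin_int_mul_pi _
    simp [integral_cos, h2]

lemma int_sin_int (j : ℤ) :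
    ∫ x in (0:ℝ)..(2*π), Real.sin (j*x) = 0 := by
  rcases eq_or_ne j 0 with h | h
  · simp [h]
  · have hj : (j:ℝ) ≠ 0 := by exact_mod_cast h
    rw [intervalIntegral.integral_comp_mul_left (fun x => Real.sin x) hj]
    have h2 : Real.cos ((j:ℝ)*(2*π)) = 1 := by
      exact_mod_cast Real.cos_int_mul_two_pi j
    simp [integral_sin, h2]

lemma cont1 (c : ℝ) : Continuous (fun x : ℝ => Real.cos (c*x)) := by fun_prop
lemma cont2 (c : ℝ) : Continuous (fun x : ℝ => Real.sin (c*x)) := by fun_prop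

lemma int_cc (k m : ℕ) (hk : 1 ≤ k) (hm : 1 ≤ m) :
    ∫ x in (0:ℝ)..(2*π), Real.cos (k*x) * Real.cos (m*x) = if k = m then π else 0 := by
  have expand : ∀ x : ℝ, Real.cos (k*x) * Real.cos (m*x)
      = (Real.cos ((((k:ℤ)-m) : ℤ)*x) + Real.cos ((((k:ℤ)+m) : ℤ)*x))/2 := by
    intro x
    push_cast
    rw [sub_mul, add_mul, Real.cos_sub, Real.cos_add]
    ring
  rw [intervalIntegral.integral_congr (fun x _ => expand x), intervalIntegral.integral_div,
    intervalIntegral.integral_add (((cont1 _)).intervalIntegrable _ _) ((cont1 _).intervalIntegrable _ _),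
    int_cos_int, int_cos_int]
  have h2 : ¬ ((k:ℤ) + m = 0) := by omega
  split_ifs with h1 h3 h3 <;> simp_all <;> omega

lemma int_ss (k m : ℕ) (hk : 1 ≤ k) (hm : 1 ≤ m) :
    ∫ x in (0:ℝ)..(2*π), Real.sin (k*x) * Real.sin (m*x) = if k = m then π else 0 := by
  have expand : ∀ x : ℝ, Real.sin (k*x) * Real.sin (m*x)
      = (Real.cos ((((k:ℤ)-m) : ℤ)*x) - Real.cos ((((k:ℤ)+m) : ℤ)*x))/2 := by
    intro x
    push_cast
    rw [sub_mul, add_mul, Real.cos_sub, Real.cos_add]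
    ring
  rw [intervalIntegral.integral_congr (fun x _ => expand x), intervalIntegral.integral_div,
    intervalIntegral.integral_sub (((cont1 _)).intervalIntegrable _ _) ((cont1 _).intervalIntegrable _ _),
    int_cos_int, int_cos_int]
  have h2 : ¬ ((k:ℤ) + m = 0) := by omega
  split_ifs with h1 h3 h3 <;> simp_all <;> omega

lemma int_cs (k m : ℕ) :
    ∫ x in (0:ℝ)..(2*π), Real.cos (k*x) * Real.sin (m*x) = 0 := by
  have expand : ∀ x : ℝ, Real.cos (k*x) * Real.sin (m*x)
      = (Real.sin ((((m:ℤ)+k) : ℤ)*x) + Real.sin ((((m:ℤ)-k) : ℤ)*x))/2 := by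
    intro x
    push_cast
    rw [sub_mul, add_mul, Real.sin_sub, Real.sin_add]
    ring
  rw [intervalIntegral.integral_congr (fun x _ => expand x), intervalIntegral.integral_div,
    intervalIntegral.integral_add (((cont2 _)).intervalIntegrable _ _) ((cont2 _).intervalIntegrable _ _),
    int_sin_int, int_sin_int]
  norm_num

lemma int_cosn (k : ℕ) (hk : 1 ≤ k) : ∫ x in (0:ℝ)..(2*π), Real.cos (k*x) = 0 := by
  have h := int_cos_int (k:ℤ)
  rw [if_neg (by omega)] at h
  exact_mod_cast h

lemma int_sinn (k : ℕ) : ∫ x in (0:ℝ)..(2*π), Real.sin (k*x) = 0 := by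
  have h := int_sin_int (k:ℤ)
  exact_mod_cast h

lemma int_lin (c d : ℝ) (f g : ℝ → ℝ) (hf : Continuous f) (hg : Continuous g) :
    ∫ x in (0:ℝ)..(2*π), (c * f x + d * g x)
      = c * (∫ x in (0:ℝ)..(2*π), f x) + d * ∫ x in (0:ℝ)..(2*π), g x := by
  rw [intervalIntegral.integral_add (f := fun x => c * f x) (g := fun x => d * g x) ((continuous_const.mul hf).intervalIntegrable _ _)
    ((continuous_const.mul hg).intervalIntegrable _ _), intervalIntegral.integral_const_mul,
    intervalIntegral.integral_const_mul]

section
variable (n : ℕ) (a b : ℕ → ℝ) (a0 M : ℝ) (T : ℝ → ℝ)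
  (hT : ∀ x, T x = a0 / 2 + ∑ k ∈ Finset.Icc 1 n,
      (a k * Real.cos (k * x) + b k * Real.sin (k * x)))

include hT

lemma Tcont : Continuous T := by
  have : T = fun x => a0/2 + ∑ k ∈ Finset.Icc 1 n,
      (a k * Real.cos (k*x) + b k * Real.sin (k*x)) := funext hT
  rw [this]
  exact continuous_const.add (continuous_finset_sum _ (fun i _ =>
    (continuous_const.mul (cont1 (i:ℝ))).add (continuous_const.mul (cont2 (i:ℝ)))))

lemma int_T_cos (k : ℕ) (hk : k ∈ Finset.Icc 1 n) :
    ∫ x in (0:ℝ)..(2*π), T x * Real.cos (k*x) = π * a k := by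
  have hk1 : 1 ≤ k := (Finset.mem_Icc.mp hk).1
  have step : ∀ x : ℝ, T x * Real.cos (k*x) = a0/2 * Real.cos (k*x)
      + ∑ m ∈ Finset.Icc 1 n, (a m * (Real.cos (m*x) * Real.cos (k*x))
          + b m * (Real.cos (k*x) * Real.sin (m*x))) := by
    intro x
    rw [hT x, add_mul, Finset.sum_mul]
    congr 1
    exact Finset.sum_congr rfl (fun m _ => by ring)
  rw [intervalIntegral.integral_congr (fun x _ => step x),
    intervalIntegral.integral_add (f := fun x => a0/2 * Real.cos (k*x)) (g := fun x => ∑ m ∈ Finset.Icc 1 n, (a m * (Real.cos (m*x) * Real.cos (k*x))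
            + b m * (Real.cos (k*x) * Real.sin (m*x)))) ((continuous_const.mul (cont1 _)).intervalIntegrable _ _)
      ((continuous_finset_sum (Finset.Icc 1 n) (fun (i:ℕ) _ =>
        (continuous_const.mul ((cont1 (i:ℝ)).mul (cont1 (k:ℝ)))).add
        (continuous_const.mul ((cont1 (k:ℝ)).mul (cont2 (i:ℝ)))))).intervalIntegrable _ _),
    intervalIntegral.integral_const_mul, int_cosn k hk1,
    intervalIntegral.integral_finset_sum (f := fun m x => a m * (Real.cos (m*x) * Real.cos (k*x))
            + b m * (Real.cos (k*x) * Real.sin (m*x))) (fun (i:ℕ) _ =>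
      ((continuous_const.mul ((cont1 (i:ℝ)).mul (cont1 (k:ℝ)))).add
        (continuous_const.mul ((cont1 (k:ℝ)).mul (cont2 (i:ℝ))))).intervalIntegrable _ _)]
  have : ∀ m ∈ Finset.Icc 1 n,
      (∫ x in (0:ℝ)..(2*π), (a m * (Real.cos (m*x) * Real.cos (k*x))
        + b m * (Real.cos (k*x) * Real.sin (m*x))))
      = if m = k then a k * π else 0 := by
    intro m hm
    rw [int_lin _ _ (fun x => Real.cos (m*x) * Real.cos (k*x)) (fun x => Real.cos (k*x) * Real.sin (m*x)) ((cont1 _).mul (cont1 _)) ((cont1 _).mul (cont2 _)),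
      int_cc m k (Finset.mem_Icc.mp hm).1 hk1, int_cs k m]
    split_ifs with h
    · subst h; ring
    · ring
  rw [Finset.sum_congr rfl this, Finset.sum_ite_eq' (Finset.Icc 1 n) k (fun _ => a k * π),
    if_pos hk]
  ring

lemma int_T_sin (k : ℕ) (hk : k ∈ Finset.Icc 1 n) :
    ∫ x in (0:ℝ)..(2*π), T x * Real.sin (k*x) = π * b k := by
  have hk1 : 1 ≤ k := (Finset.mem_Icc.mp hk).1
  have step : ∀ x : ℝ, T x * Real.sin (k*x) = a0/2 * Real.sin (k*x)
      + ∑ m ∈ Finset.Icc 1 n, (a m * (Real.cos (m*x) * Real.sin (k*x))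
          + b m * (Real.sin (m*x) * Real.sin (k*x))) := by
    intro x
    rw [hT x, add_mul, Finset.sum_mul]
    congr 1
    exact Finset.sum_congr rfl (fun m _ => by ring)
  rw [intervalIntegral.integral_congr (fun x _ => step x),
    intervalIntegral.integral_add (f := fun x => a0/2 * Real.sin (k*x)) (g := fun x => ∑ m ∈ Finset.Icc 1 n, (a m * (Real.cos (m*x) * Real.sin (k*x))
            + b m * (Real.sin (m*x) * Real.sin (k*x)))) ((continuous_const.mul (cont2 _)).intervalIntegrable _ _)
      ((continuous_finset_sum (Finset.Icc 1 n) (fun (i:ℕ) _ =>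
        (continuous_const.mul ((cont1 (i:ℝ)).mul (cont2 (k:ℝ)))).add
        (continuous_const.mul ((cont2 (i:ℝ)).mul (cont2 (k:ℝ)))))).intervalIntegrable _ _),
    intervalIntegral.integral_const_mul, int_sinn k,
    intervalIntegral.integral_finset_sum (f := fun m x => a m * (Real.cos (m*x) * Real.sin (k*x))
            + b m * (Real.sin (m*x) * Real.sin (k*x))) (fun (i:ℕ) _ =>
      ((continuous_const.mul ((cont1 (i:ℝ)).mul (cont2 (k:ℝ)))).add
        (continuous_const.mul ((cont2 (i:ℝ)).mul (cont2 (k:ℝ))))).intervalIntegrable _ _)]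
  have : ∀ m ∈ Finset.Icc 1 n,
      (∫ x in (0:ℝ)..(2*π), (a m * (Real.cos (m*x) * Real.sin (k*x))
        + b m * (Real.sin (m*x) * Real.sin (k*x))))
      = if m = k then b k * π else 0 := by
    intro m hm
    rw [int_lin _ _ (fun x => Real.cos (m*x) * Real.sin (k*x)) (fun x => Real.sin (m*x) * Real.sin (k*x)) ((cont1 _).mul (cont2 _)) ((cont2 _).mul (cont2 _)),
      int_cs m k, int_ss m k (Finset.mem_Icc.mp hm).1 hk1]
    split_ifs with h
    · subst h; ring
    · ring
  rw [Finset.sum_congr rfl this, Finset.sum_ite_eq' (Finset.Icc 1 n) k (fun _ => b k * π),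
    if_pos hk]
  ring

lemma stepA (hM : ∀ x, |T x| ≤ M) (k : ℕ) (hk : k ∈ Finset.Icc 1 n) :
    a k ^ 2 + b k ^ 2 ≤ 2 * M ^ 2 := by
  have hk1 : 1 ≤ k := (Finset.mem_Icc.mp hk).1
  have hM0 : 0 ≤ M := (abs_nonneg _).trans (hM 0)
  set u := a k with hu
  set v := b k with hv
  rcases eq_or_ne (u^2 + v^2) 0 with h00 | h00
  · rw [h00]; positivity
  have hR : 0 < u^2 + v^2 := lt_of_le_of_ne (by positivity) (Ne.symm h00)
  set ρ := Real.sqrt (u^2 + v^2) with hρ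
  have hρ2 : ρ^2 = u^2 + v^2 := Real.sq_sqrt (by positivity)
  have h0 : 0 < ρ := Real.sqrt_pos.mpr hR
  set g : ℝ → ℝ := fun x => u * Real.cos (k*x) + v * Real.sin (k*x) with hg
  have hgc : Continuous g := (continuous_const.mul (cont1 _)).add (continuous_const.mul (cont2 _))
  have hTg : ∫ x in (0:ℝ)..(2*π), T x * g x = π * (u^2+v^2) := by
    have step : ∀ x : ℝ, T x * g x = u * (T x * Real.cos (k*x)) + v * (T x * Real.sin (k*x)) := by
      intro x; simp only [hg]; ring
    rw [intervalIntegral.integral_congr (fun x _ => step x),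
      int_lin _ _ (fun x => T x * Real.cos (k*x)) (fun x => T x * Real.sin (k*x)) ((Tcont n a b a0 T hT).mul (cont1 _)) ((Tcont n a b a0 T hT).mul (cont2 _)),
      int_T_cos n a b a0 T hT k hk, int_T_sin n a b a0 T hT k hk]
    ring
  have hg2 : ∫ x in (0:ℝ)..(2*π), (g x)^2 = π * (u^2+v^2) := by
    have step : ∀ x : ℝ, (g x)^2 = (u*u) * (Real.cos (k*x) * Real.cos (k*x))
        + ((2*u*v) * (Real.cos (k*x) * Real.sin (k*x)) + (v*v) * (Real.sin (k*x) * Real.sin (k*x))) := by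
      intro x; simp only [hg]; ring
    rw [intervalIntegral.integral_congr (fun x _ => step x),
      intervalIntegral.integral_add (f := fun x => (u*u) * (Real.cos (k*x) * Real.cos (k*x))) (g := fun x => (2*u*v) * (Real.cos (k*x) * Real.sin (k*x)) + (v*v) * (Real.sin (k*x) * Real.sin (k*x))) ((continuous_const.mul ((cont1 _).mul (cont1 _))).intervalIntegrable _ _)
        (((continuous_const.mul ((cont1 _).mul (cont2 _))).add (continuous_const.mul ((cont2 _).mul (cont2 _)))).intervalIntegrable _ _),
      intervalIntegral.integral_const_mul,
      int_lin _ _ (fun x => Real.cos (k*x) * Real.sin (k*x)) (fun x => Real.sin (k*x) * Real.sin (k*x)) ((cont1 _).mul (cont2 _)) ((cont2 _).mul (cont2 _)),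
      int_cc k k hk1 hk1, int_cs k k, int_ss k k hk1 hk1, if_pos rfl]
    ring
  set t := ρ / Real.sqrt 2 with htdef
  have hs2 : (0:ℝ) < Real.sqrt 2 := by positivity
  have h2 : Real.sqrt 2 * Real.sqrt 2 = 2 := Real.mul_self_sqrt (by norm_num)
  have ht0 : 0 < t := by positivity
  have key : π * (u^2+v^2) ≤ M * (Real.sqrt 2 * π * ρ) := by
    have mono1 : ∫ x in (0:ℝ)..(2*π), T x * g x
        ≤ ∫ x in (0:ℝ)..(2*π), M * ((g x)^2/(2*t) + t/2) := by
      apply intervalIntegral.integral_mono_on (by positivity)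
        (((Tcont n a b a0 T hT).mul hgc).intervalIntegrable _ _)
        ((continuous_const.mul (((hgc.pow 2).div_const _).add continuous_const)).intervalIntegrable _ _)
      intro x _
      have h1 : |g x| ≤ (g x)^2/(2*t) + t/2 := by
        have e1 : (g x)^2/(2*t) + t/2 = ((g x)^2 + t^2)/(2*t) := by field_simp
        rw [e1, le_div_iff₀ (by positivity)]
        nlinarith [sq_nonneg (|g x| - t), sq_abs (g x)]
      calc T x * g x ≤ |T x| * |g x| := by
            rw [← abs_mul]; exact le_abs_self _
        _ ≤ M * ((g x)^2/(2*t) + t/2) := mul_le_mul (hM x) h1 (abs_nonneg _) hM0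
    have eval : ∫ x in (0:ℝ)..(2*π), M * ((g x)^2/(2*t) + t/2)
        = M * (π * (u^2+v^2) / (2*t) + t/2 * (2*π)) := by
      rw [intervalIntegral.integral_const_mul,
        intervalIntegral.integral_add (f := fun x => (g x)^2/(2*t)) (g := fun _ => t/2) (((hgc.pow 2).div_const _).intervalIntegrable _ _)
          (continuous_const.intervalIntegrable _ _),
        intervalIntegral.integral_div, hg2, intervalIntegral.integral_const, smul_eq_mul]
      ring
    have simp2 : π * (u^2+v^2) / (2*t) + t/2 * (2*π) = Real.sqrt 2 * π * ρ := by
      rw [← hρ2, htdef]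
      field_simp
      ring_nf
      rw [Real.sq_sqrt (show (0:ℝ) ≤ 2 by norm_num)]
      ring
    calc π * (u^2+v^2) = ∫ x in (0:ℝ)..(2*π), T x * g x := hTg.symm
      _ ≤ _ := mono1
      _ = M * (Real.sqrt 2 * π * ρ) := by rw [eval, simp2]
  have hρM : ρ ≤ Real.sqrt 2 * M := by
    have hπ : (0:ℝ) < π := Real.pi_pos
    nlinarith [mul_pos hπ h0, hρ2]
  nlinarith [hρ2, h0.le, hρM, Real.sqrt_nonneg 2]
end

lemma geom_aux (w : ℂ) (N : ℕ) (hw : w ≠ 1) (hwN : w ^ N = 1) :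
    ∑ j ∈ Finset.range N, w ^ j = 0 := by
  rw [geom_sum_eq hw, hwN, sub_self, zero_div]

lemma exp_ne_neg_one (θ : ℝ) (h1 : 0 < θ) (h2 : θ < π) :
    Complex.exp (θ * Complex.I) ≠ -1 := by
  intro h
  have hre : Real.cos θ = -1 := by
    have := congrArg Complex.re h
    simpa [Complex.exp_ofReal_mul_I_re] using this
  have : Real.cos π < Real.cos θ :=
    Real.strictAntiOn_cos ⟨h1.le, h2.le⟩ ⟨Real.pi_pos.le, le_rfl⟩ h2
  rw [Real.cos_pi, hre] at this
  exact lt_irrefl _ this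

lemma key_sum (n : ℕ) (hn : 1 ≤ n) (k : ℕ) (hk1 : 1 ≤ k) (hkn : k ≤ n) (φ : ℝ) :
    ∑ j ∈ Finset.range (2*n), ((-1:ℂ))^j * Complex.exp ((k * ((φ + j*π)/n) : ℝ) * Complex.I)
      = if k = n then (2*n : ℂ) * Complex.exp ((φ:ℝ) * Complex.I) else 0 := by
  have hn0 : (n:ℝ) ≠ 0 := by positivity
  have term : ∀ j : ℕ, ((-1:ℂ))^j * Complex.exp ((k * ((φ + j*π)/n) : ℝ) * Complex.I)
      = Complex.exp (((k*φ/n : ℝ)) * Complex.I) * ((-1) * Complex.exp (((k*π/n : ℝ)) * Complex.I))^j := by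
    intro j
    rw [mul_pow, ← Complex.exp_nat_mul]
    rw [show ((k * ((φ + j*π)/n) : ℝ) : ℂ) * Complex.I
        = ((k*φ/n : ℝ) : ℂ) * Complex.I + (j:ℂ) * (((k*π/n : ℝ):ℂ) * Complex.I) by
      have : (n:ℂ) ≠ 0 := by exact_mod_cast hn0
      push_cast
      field_simp]
    rw [Complex.exp_add]
    ring
  rw [Finset.sum_congr rfl (fun j _ => term j), ← Finset.mul_sum]
  by_cases hk : k = n
  · subst hk
    have e1 : (-1:ℂ) * Complex.exp (((k*π/k : ℝ)) * Complex.I) = 1 := by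
      rw [show (k*π/k:ℝ) = π from by field_simp]
      rw [Complex.exp_pi_mul_I]; ring
    rw [if_pos rfl, e1]
    simp only [one_pow, Finset.sum_const, Finset.card_range, nsmul_eq_mul, mul_one]
    rw [show (k*φ/k : ℝ) = φ from by
      field_simp]
    push_cast; ring
  · have hkn' : k < n := lt_of_le_of_ne hkn hk
    rw [if_neg hk]
    have hw1 : (-1:ℂ) * Complex.exp (((k*π/n : ℝ)) * Complex.I) ≠ 1 := by
      intro h
      apply exp_ne_neg_one (k*π/n) (by positivity)
        (by
          rw [div_lt_iff₀ (by positivity : (0:ℝ) < n)]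
          calc (k:ℝ)*π < n*π := by
                apply mul_lt_mul_of_pos_right _ Real.pi_pos
                exact_mod_cast hkn'
            _ = π * n := by ring)
      linear_combination -h
    have hwN : ((-1:ℂ) * Complex.exp (((k*π/n : ℝ)) * Complex.I)) ^ (2*n) = 1 := by
      rw [mul_pow, ← Complex.exp_nat_mul]
      have e2 : ((2*n : ℕ):ℂ) * (((k*π/n : ℝ):ℂ) * Complex.I) = (k:ℂ) * (2*(π:ℂ) * Complex.I) := by
        have : (n:ℂ) ≠ 0 := by exact_mod_cast hn0
        push_cast
        field_simp
      rw [e2]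
      have e3 := Complex.exp_int_mul_two_pi_mul_I (k:ℤ)
      push_cast at e3
      rw [e3]
      simp [pow_mul]
    rw [geom_aux _ (2*n) hw1 hwN, mul_zero]

lemma re_aux (u v θ : ℝ) : (((u : ℂ) - v * Complex.I) * Complex.exp ((θ:ℝ) * Complex.I)).re
    = u * Real.cos θ + v * Real.sin θ := by
  rw [Complex.exp_mul_I]
  simp [Complex.mul_re, Complex.mul_im, Complex.cos_ofReal_re, Complex.sin_ofReal_re,
    Complex.cos_ofReal_im, Complex.sin_ofReal_im]

lemma stepB (n : ℕ) (hn : 1 ≤ n) (a b : ℕ → ℝ) (a0 M : ℝ) (T : ℝ → ℝ)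
    (hT : ∀ x, T x = a0 / 2 + ∑ k ∈ Finset.Icc 1 n,
      (a k * Real.cos (k * x) + b k * Real.sin (k * x)))
    (hM : ∀ x, |T x| ≤ M) :
    a n ^ 2 + b n ^ 2 ≤ M ^ 2 := by
  have hM0 : 0 ≤ M := (abs_nonneg _).trans (hM 0)
  rcases eq_or_ne (a n^2 + b n^2) 0 with h00 | h00
  · rw [h00]; positivity
  have hR : 0 < a n^2 + b n^2 := lt_of_le_of_ne (by positivity) (Ne.symm h00)
  set ρ := Real.sqrt (a n^2 + b n^2) with hρ
  have hρ2 : ρ^2 = a n^2 + b n^2 := Real.sq_sqrt hR.le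
  have hρ0 : 0 < ρ := Real.sqrt_pos.mpr hR
  set z : ℂ := (a n : ℂ) + (b n) * Complex.I with hzdef
  have hz : z ≠ 0 := by
    intro h
    have h1 : z.re = 0 := by rw [h]; simp
    have h2 : z.im = 0 := by rw [h]; simp
    simp [hzdef] at h1 h2
    rw [h1, h2] at hR; norm_num at hR
  have habs : ‖z‖ = ρ := by
    rw [Complex.norm_def, hzdef, Complex.normSq_add_mul_I]
  set φ := Complex.arg z with hφ
  have han : a n = ρ * Real.cos φ := by
    rw [hφ, Complex.cos_arg hz, habs]
    have : z.re = a n := by simp [hzdef]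
    rw [this]; field_simp
  have hbn : b n = ρ * Real.sin φ := by
    rw [hφ, Complex.sin_arg, habs]
    have : z.im = b n := by simp [hzdef]
    rw [this]; field_simp
  have hz2 : ((a n:ℂ) - b n * Complex.I) * Complex.exp ((φ:ℝ) * Complex.I) = (ρ:ℂ) := by
    rw [Complex.exp_mul_I, han, hbn, Complex.ofReal_mul, Complex.ofReal_mul,
      ← Complex.ofReal_cos, ← Complex.ofReal_sin]
    have h1' : (Real.sin φ:ℂ)^2 + (Real.cos φ:ℂ)^2 = 1 := by
      exact_mod_cast Real.sin_sq_add_cos_sq φ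
    linear_combination (ρ:ℂ) * h1' - (ρ:ℂ) * (Real.sin φ:ℂ)^2 * Complex.I_sq
  have inner : ∀ k ∈ Finset.Icc 1 n,
      ∑ j ∈ Finset.range (2*n), (-1:ℝ)^j * (a k * Real.cos (k * ((φ + j*π)/n)) + b k * Real.sin (k * ((φ + j*π)/n)))
        = if k = n then 2*n*ρ else 0 := by
    intro k hk
    obtain ⟨hk1, hkn⟩ := Finset.mem_Icc.mp hk
    have e1 : ∀ j : ℕ, (-1:ℝ)^j * (a k * Real.cos (k * ((φ + j*π)/n)) + b k * Real.sin (k * ((φ + j*π)/n)))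
        = (((a k : ℂ) - b k * Complex.I) * (((-1:ℂ))^j
            * Complex.exp ((k * ((φ + j*π)/n) : ℝ) * Complex.I))).re := by
      intro j
      have e2 : (((a k : ℂ) - b k * Complex.I) * (((-1:ℂ))^j
          * Complex.exp ((k * ((φ + j*π)/n) : ℝ) * Complex.I)))
          = (((-1:ℝ)^j : ℝ) : ℂ) * (((a k : ℂ) - b k * Complex.I)
            * Complex.exp ((k * ((φ + j*π)/n) : ℝ) * Complex.I)) := by
        push_cast; ring
      rw [e2, Complex.re_ofReal_mul, re_aux]
    rw [Finset.sum_congr rfl (fun j _ => e1 j), ← Complex.re_sum, ← Finset.mul_sum,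
      key_sum n hn k hk1 hkn φ]
    split_ifs with h
    · subst h
      rw [show ((a k:ℂ) - b k * Complex.I) * ((2*k : ℂ) * Complex.exp ((φ:ℝ) * Complex.I))
          = (2*(k:ℂ)) * (((a k:ℂ) - b k * Complex.I) * Complex.exp ((φ:ℝ) * Complex.I)) from by
        ring, hz2, show (2*(k:ℂ)) * (ρ:ℂ) = ((2*k*ρ : ℝ) : ℂ) from by push_cast; ring,
        Complex.ofReal_re]
    · simp
  have alt_sum : ∑ j ∈ Finset.range (2*n), (-1:ℝ)^j = 0 := by
    rw [geom_sum_eq (by norm_num : (-1:ℝ) ≠ 1)]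
    rw [pow_mul]
    norm_num
  have hsum : ∑ j ∈ Finset.range (2*n), (-1:ℝ)^j * T ((φ + j*π)/n) = 2*n*ρ := by
    have e : ∀ j : ℕ, (-1:ℝ)^j * T ((φ + j*π)/n) = (-1:ℝ)^j * (a0/2)
        + ∑ k ∈ Finset.Icc 1 n, (-1:ℝ)^j
            * (a k * Real.cos (k * ((φ + j*π)/n)) + b k * Real.sin (k * ((φ + j*π)/n))) := by
      intro j; rw [hT ((φ + j*π)/n), mul_add, Finset.mul_sum]
    rw [Finset.sum_congr rfl (fun j _ => e j), Finset.sum_add_distrib, ← Finset.sum_mul,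
      alt_sum, zero_mul, zero_add, Finset.sum_comm, Finset.sum_congr rfl inner,
      Finset.sum_ite_eq' (Finset.Icc 1 n) n (fun _ => 2*n*ρ),
      if_pos (Finset.mem_Icc.mpr ⟨hn, le_rfl⟩)]
  have hn0 : (0:ℝ) < (n:ℝ) := by exact_mod_cast hn
  have hbound : 2*(n:ℝ)*ρ ≤ 2*n*M := by
    calc (2*(n:ℝ)*ρ : ℝ) = ∑ j ∈ Finset.range (2*n), (-1:ℝ)^j * T ((φ + j*π)/n) := hsum.symm
      _ ≤ |∑ j ∈ Finset.range (2*n), (-1:ℝ)^j * T ((φ + j*π)/n)| := le_abs_self _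
      _ ≤ ∑ j ∈ Finset.range (2*n), |(-1:ℝ)^j * T ((φ + j*π)/n)| := Finset.abs_sum_le_sum_abs _ _
      _ ≤ ∑ _j ∈ Finset.range (2*n), M := by
          apply Finset.sum_le_sum
          intro j _
          rw [abs_mul, abs_pow, abs_neg, abs_one, one_pow, one_mul]
          exact hM _
      _ = 2*n*M := by
          rw [Finset.sum_const, Finset.card_range, nsmul_eq_mul]
          push_cast; ring
  have hρM : ρ ≤ M := le_of_mul_le_mul_left (by linarith) (by positivity : (0:ℝ) < 2*n)
  nlinarith [hρ2]


theorem embedding_step (ψ : ℕ → ℝ) (hψ : ∀ k, 0 < ψ k) (n : ℕ) (hn : 1 ≤ n)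
    (a b : ℕ → ℝ) (a0 : ℝ) (T : ℝ → ℝ)
    (hT : ∀ x, T x = a0 / 2 + ∑ k ∈ Finset.Icc 1 n,
      (a k * Real.cos (k * x) + b k * Real.sin (k * x)))
    (hnorm : (⨆ t : ℝ, |T t|) ≤ (1 / Real.sqrt π) *
      (Real.sqrt (1 / ψ n ^ 2 + 2 * ∑ k ∈ Finset.Icc 1 (n - 1), 1 / ψ k ^ 2))⁻¹) :
    Real.sqrt π * Real.sqrt (∑ k ∈ Finset.Icc 1 (n - 1), (a k ^ 2 + b k ^ 2) / ψ k ^ 2 +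
      (a n ^ 2 + b n ^ 2) / ψ n ^ 2) ≤ 1 := by
  set M : ℝ := ⨆ t : ℝ, |T t| with hMdef
  have hbdd : BddAbove (Set.range fun t => |T t|) := by
    refine ⟨|a0|/2 + ∑ k ∈ Finset.Icc 1 n, (|a k| + |b k|), ?_⟩
    rintro y ⟨x, rfl⟩
    show |T x| ≤ _
    rw [hT x]
    calc |a0/2 + ∑ k ∈ Finset.Icc 1 n, (a k * Real.cos (k * x) + b k * Real.sin (k * x))|
        ≤ |a0/2| + |∑ k ∈ Finset.Icc 1 n, (a k * Real.cos (k * x) + b k * Real.sin (k * x))| :=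
          abs_add_le _ _
      _ ≤ |a0|/2 + ∑ k ∈ Finset.Icc 1 n, (|a k| + |b k|) := by
          apply add_le_add
          · rw [abs_div]; norm_num
          · refine (Finset.abs_sum_le_sum_abs _ _).trans (Finset.sum_le_sum fun i _ => ?_)
            refine (abs_add_le _ _).trans ?_
            rw [abs_mul, abs_mul]
            have h1 : |Real.cos (i * x)| ≤ 1 := Real.abs_cos_le_one _
            have h2 : |Real.sin (i * x)| ≤ 1 := Real.abs_sin_le_one _
            nlinarith [abs_nonneg (a i), abs_nonneg (b i)]
  have hM : ∀ x, |T x| ≤ M := fun x => le_ciSup hbdd x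
  have hM0 : 0 ≤ M := (abs_nonneg _).trans (hM 0)
  have hA : ∀ k ∈ Finset.Icc 1 (n-1), a k ^ 2 + b k ^ 2 ≤ 2 * M ^ 2 := by
    intro k hk
    obtain ⟨h1, h2⟩ := Finset.mem_Icc.mp hk
    exact stepA n a b a0 M T hT hM k (Finset.mem_Icc.mpr ⟨h1, by omega⟩)
  have hB : a n ^ 2 + b n ^ 2 ≤ M ^ 2 := stepB n hn a b a0 M T hT hM
  set W : ℝ := 1 / ψ n ^ 2 + 2 * ∑ k ∈ Finset.Icc 1 (n - 1), 1 / ψ k ^ 2 with hWdef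
  have hW0 : 0 < W := by
    have h1 : 0 < 1 / ψ n ^ 2 := by have := hψ n; positivity
    have h2 : (0:ℝ) ≤ ∑ k ∈ Finset.Icc 1 (n-1), 1 / ψ k ^ 2 :=
      Finset.sum_nonneg fun k _ => by have := hψ k; positivity
    rw [hWdef]; linarith
  have hsum2 : ∑ k ∈ Finset.Icc 1 (n - 1), (a k ^ 2 + b k ^ 2) / ψ k ^ 2 +
      (a n ^ 2 + b n ^ 2) / ψ n ^ 2 ≤ M ^ 2 * W := by
    have t1 : ∑ k ∈ Finset.Icc 1 (n - 1), (a k ^ 2 + b k ^ 2) / ψ k ^ 2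
        ≤ ∑ k ∈ Finset.Icc 1 (n - 1), 2 * M ^ 2 * (1 / ψ k ^ 2) := by
      refine Finset.sum_le_sum fun k hk => ?_
      rw [mul_one_div]
      gcongr
      exact hA k hk
    have t2 : (a n ^ 2 + b n ^ 2) / ψ n ^ 2 ≤ M ^ 2 * (1 / ψ n ^ 2) := by
      rw [mul_one_div]
      gcongr
    calc ∑ k ∈ Finset.Icc 1 (n - 1), (a k ^ 2 + b k ^ 2) / ψ k ^ 2 +
          (a n ^ 2 + b n ^ 2) / ψ n ^ 2
        ≤ ∑ k ∈ Finset.Icc 1 (n - 1), 2 * M ^ 2 * (1 / ψ k ^ 2) + M ^ 2 * (1 / ψ n ^ 2) :=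
          add_le_add t1 t2
      _ = M ^ 2 * W := by rw [← Finset.mul_sum, hWdef]; ring
  have hπ : (0:ℝ) < Real.sqrt π := Real.sqrt_pos.mpr Real.pi_pos
  have hWs : (0:ℝ) < Real.sqrt W := Real.sqrt_pos.mpr hW0
  calc Real.sqrt π * Real.sqrt (∑ k ∈ Finset.Icc 1 (n - 1), (a k ^ 2 + b k ^ 2) / ψ k ^ 2 +
        (a n ^ 2 + b n ^ 2) / ψ n ^ 2)
      ≤ Real.sqrt π * Real.sqrt (M ^ 2 * W) :=
        mul_le_mul_of_nonneg_left (Real.sqrt_le_sqrt hsum2) hπ.le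
    _ = Real.sqrt π * (M * Real.sqrt W) := by
        rw [Real.sqrt_mul (sq_nonneg M), Real.sqrt_sq hM0]
    _ ≤ Real.sqrt π * (((1 / Real.sqrt π) * (Real.sqrt W)⁻¹) * Real.sqrt W) :=
        mul_le_mul_of_nonneg_left (mul_le_mul_of_nonneg_right hnorm hWs.le) hπ.le
    _ = 1 := by field_simp
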